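/- arXiv:2202.01052 — 2 statements merged into one kernel-verified Lean document; each statement's English description precedes it below -/
import Mathlib

section
/- Let a, b_1, l be integers with l ≥ 1. The open interval I = (min(b_1, (−a−b_1−1)/2), max(b_1 − 1, (−a−b_1−1)/2)) of real numbers contains exactly l integers if and only if |a + 3b_1| ∈ {2l+2, 2l+3}. -/
private lemma half_lt (m t : ℤ) : (m : ℝ) + 1/2 < t ↔ m < t := by
  constructor
  · intro h
    have : (m : ℝ) < t := by linarith
    exact_mod_cast this
  · intro h
    have : (m : ℝ) + 1 ≤ t := by exact_mod_cast h
    linarith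

private lemma lt_half (m t : ℤ) : (t : ℝ) < (m : ℝ) + 1/2 ↔ t < m + 1 := by
  constructor
  · intro h
    have : (t : ℝ) < (m : ℝ) + 1 := by linarith
    exact_mod_cast this
  · intro h
    have : (t : ℝ) + 1 ≤ (m : ℝ) + 1 := by exact_mod_cast h
    linarith

private lemma cast_lt_sub_one (b t : ℤ) : (t : ℝ) < (b : ℝ) - 1 ↔ t < b - 1 := by
  exact_mod_cast Iff.rfl

/-- The open real interval
`I = (min(b₁, (−a−b₁−1)/2), max(b₁−1, (−a−b₁−1)/2))` contains exactly `l ≥ 1`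
integers if and only if `|a + 3b₁| ∈ {2l+2, 2l+3}`. -/
theorem stmt_9 (a b1 l : ℤ) (hl : 1 ≤ l) :
    {t : ℤ | min (b1 : ℝ) ((-a - b1 - 1) / 2) < (t : ℝ) ∧
        (t : ℝ) < max ((b1 : ℝ) - 1) ((-a - b1 - 1) / 2)}.ncard = l.toNat ↔
      |a + 3 * b1| = 2 * l + 2 ∨ |a + 3 * b1| = 2 * l + 3 := by
  rcases Int.even_or_odd (-a - b1 - 1) with ⟨m, hm⟩ | ⟨m, hm⟩
  · -- even case : -a - b1 - 1 = m + m
    have hR : (-(a : ℝ) - b1 - 1) / 2 = (m : ℝ) := by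
      have h1 : (-(a : ℝ) - b1 - 1) = ((-a - b1 - 1 : ℤ) : ℝ) := by push_cast; ring
      rw [h1, hm]; push_cast; ring
    have hset : {t : ℤ | min (b1 : ℝ) ((-a - b1 - 1) / 2) < (t : ℝ) ∧
        (t : ℝ) < max ((b1 : ℝ) - 1) ((-a - b1 - 1) / 2)}
        = ↑(Finset.Ioo (min b1 m) (max (b1 - 1) m)) := by
      ext t
      simp only [Set.mem_setOf_eq, Finset.coe_Ioo, Set.mem_Ioo, hR, min_lt_iff, lt_max_iff,
        Int.cast_lt, cast_lt_sub_one]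
    rw [hset, Set.ncard_coe_finset, Int.card_Ioo, Int.abs_eq_natAbs]
    omega
  · -- odd case : -a - b1 - 1 = 2*m + 1
    have hR : (-(a : ℝ) - b1 - 1) / 2 = (m : ℝ) + 1/2 := by
      have h1 : (-(a : ℝ) - b1 - 1) = ((-a - b1 - 1 : ℤ) : ℝ) := by push_cast; ring
      rw [h1, hm]; push_cast; ring
    have hset : {t : ℤ | min (b1 : ℝ) ((-a - b1 - 1) / 2) < (t : ℝ) ∧
        (t : ℝ) < max ((b1 : ℝ) - 1) ((-a - b1 - 1) / 2)}
        = ↑(Finset.Ioo (min b1 m) (max (b1 - 1) (m + 1))) := by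
      ext t
      simp only [Set.mem_setOf_eq, Finset.coe_Ioo, Set.mem_Ioo, hR, min_lt_iff, lt_max_iff,
        Int.cast_lt, cast_lt_sub_one, half_lt, lt_half]
    rw [hset, Set.ncard_coe_finset, Int.card_Ioo, Int.abs_eq_natAbs]
    omega
end

section
/- Let E be a special rank-2 l-away ACM vector bundle on a del Pezzo surface X with index i_X and c_1(E) = c·h. Let k_0 and k_0 + s be the smallest and largest integers t with H^1(X, E(t·h)) ≠ 0. Then Serre duality h^1(E(k_0·h)) = h^1(E((−c − k_0 − i_X)·h)) forces c = −2k_0 − i_X − s. -/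
/-- Let `h1 t` denote `h¹(X, E(t·h))` for a special rank-2 `l`-away ACM bundle
`E` on a del Pezzo surface with index `iX` and `c₁(E) = c·h`. If `k₀` and
`k₀ + s` are the smallest and largest integers `t` with `h1 t ≠ 0`, then Serre
duality `h1 t = h1 (−c − t − iX)` forces `c = −2k₀ − iX − s`. -/
theorem stmt_15 (h1 : ℤ → ℕ) (c iX k0 s : ℤ) (hs : 0 ≤ s)
    (hrange : ∀ t : ℤ, h1 t ≠ 0 ↔ k0 ≤ t ∧ t ≤ k0 + s)
    (serre : ∀ t : ℤ, h1 t = h1 (-c - t - iX)) :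
    c = -2 * k0 - iX - s := by
  have h0 : h1 k0 ≠ 0 := (hrange k0).mpr ⟨le_refl _, by omega⟩
  have hsn : h1 (k0 + s) ≠ 0 := (hrange (k0 + s)).mpr ⟨by omega, le_refl _⟩
  have a := (hrange (-c - k0 - iX)).mp (by rw [← serre k0]; exact h0)
  have b := (hrange (-c - (k0 + s) - iX)).mp (by rw [← serre (k0 + s)]; exact hsn)
  omega
end
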